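/- Let J ⊆ S^n_+ be a closed convex cone that is ROG, and let F be a face of J. Then F is ROG, i.e., F equals the convex hull of Γ^n ∩ F. -/

import Mathlib

open Matrix

noncomputable section

/-- Lemma 4.1 (ii): every face of a ROG cone is ROG. -/
theorem stmt_5 (n : ℕ) (J F : Set (Matrix (Fin n) (Fin n) ℝ))
    (hJpsd : ∀ X ∈ J, X.PosSemidef) (hJclosed : IsClosed J) (hJconv : Convex ℝ J)
    (hJcone : ∀ (c : ℝ), 0 ≤ c → ∀ X ∈ J, c • X ∈ J)
    (hROG : J = convexHull ℝ ({X | ∃ x : Fin n → ℝ, X = vecMulVec x x} ∩ J))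
    (hFsub : F ⊆ J) (hFconv : Convex ℝ F)
    (hFcone : ∀ (c : ℝ), 0 ≤ c → ∀ X ∈ F, c • X ∈ F)
    (hFface : ∀ X ∈ J, ∀ Y ∈ J, X + Y ∈ F → X ∈ F ∧ Y ∈ F) :
    F = convexHull ℝ ({X | ∃ x : Fin n → ℝ, X = vecMulVec x x} ∩ F) := by
  classical
  -- J is closed under addition
  have hJadd : ∀ X ∈ J, ∀ Y ∈ J, X + Y ∈ J := by
    intro X hX Y hY
    have h := hJconv hX hY (by norm_num : (0:ℝ) ≤ 1/2) (by norm_num : (0:ℝ) ≤ 1/2)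
      (by norm_num)
    have h2 := hJcone 2 (by norm_num) _ h
    have : (2:ℝ) • ((1/2 : ℝ) • X + (1/2 : ℝ) • Y) = X + Y := by
      rw [smul_add, smul_smul, smul_smul]; norm_num
    rwa [this] at h2
  apply Set.Subset.antisymm
  · intro X hX
    have hXJ : X ∈ J := hFsub hX
    have h0J : (0 : Matrix (Fin n) (Fin n) ℝ) ∈ J := by
      simpa using hJcone 0 le_rfl X hXJ
    -- sums of elements of J are in J
    have hJsum : ∀ {ι : Type} (t : Finset ι) (g : ι → Matrix (Fin n) (Fin n) ℝ),
        (∀ i ∈ t, g i ∈ J) → (∑ i ∈ t, g i) ∈ J := by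
      intro ι t g
      classical
      induction t using Finset.induction_on with
      | empty => intro _; simpa using h0J
      | @insert a s ha ih =>
        intro hg
        rw [Finset.sum_insert ha]
        exact hJadd _ (hg _ (Finset.mem_insert_self _ _)) _
          (ih fun i hi => hg i (Finset.mem_insert_of_mem hi))
    -- face property extends to finite sums
    have hFsum : ∀ {ι : Type} (t : Finset ι) (g : ι → Matrix (Fin n) (Fin n) ℝ),
        (∀ i ∈ t, g i ∈ J) → (∑ i ∈ t, g i) ∈ F → ∀ i ∈ t, g i ∈ F := by
      intro ι t g
      classical
      induction t using Finset.induction_on with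
      | empty => intro _ _ i hi; simp at hi
      | @insert a s ha ih =>
        intro hg hsum i hi
        rw [Finset.sum_insert ha] at hsum
        have hrest : (∑ j ∈ s, g j) ∈ J :=
          hJsum s g fun j hj => hg j (Finset.mem_insert_of_mem hj)
        have := hFface _ (hg _ (Finset.mem_insert_self _ _)) _ hrest hsum
        rcases Finset.mem_insert.mp hi with rfl | hi
        · exact this.1
        · exact ih (fun j hj => hg j (Finset.mem_insert_of_mem hj)) this.2 i hi
    -- unfold the ROG representation of X
    have hXrep : X ∈ convexHull ℝ ({X | ∃ x : Fin n → ℝ, X = vecMulVec x x} ∩ J) := by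
      rw [← hROG]; exact hXJ
    rw [convexHull_eq] at hXrep
    obtain ⟨ι, t, w, z, hw, hw1, hz, hcm⟩ := hXrep
    have hXsum : X = ∑ i ∈ t, w i • z i := by
      rw [← hcm, Finset.centerMass_eq_of_sum_1 _ _ hw1]
    -- each w i • z i is in J
    have hgJ : ∀ i ∈ t, w i • z i ∈ J :=
      fun i hi => hJcone _ (hw i hi) _ (hz i hi).2
    have hgF : ∀ i ∈ t, w i • z i ∈ F := by
      apply hFsum t _ hgJ
      rw [← hXsum]; exact hX
    -- restrict to positive weights
    set t' := t.filter (fun i => w i ≠ 0) with ht'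
    have hsub : t' ⊆ t := Finset.filter_subset _ _
    have hw1' : ∑ i ∈ t', w i = 1 := by
      rw [← hw1]
      exact Finset.sum_filter_ne_zero t
    have hzF : ∀ i ∈ t', z i ∈ {X | ∃ x : Fin n → ℝ, X = vecMulVec x x} ∩ F := by
      intro i hi
      have hit := hsub hi
      have hwne : w i ≠ 0 := (Finset.mem_filter.mp hi).2
      have hwpos : 0 < w i := lt_of_le_of_ne (hw i hit) (Ne.symm hwne)
      refine ⟨(hz i hit).1, ?_⟩
      have := hFcone (w i)⁻¹ (by positivity) _ (hgF i hit)
      rwa [smul_smul, inv_mul_cancel₀ hwne, one_smul] at this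
    have hXsum' : X = ∑ i ∈ t', w i • z i := by
      rw [hXsum]
      refine (Finset.sum_filter_of_ne ?_).symm
      intro i _ h
      intro hwi
      exact h (by rw [hwi, zero_smul])
    rw [hXsum', ← Finset.centerMass_eq_of_sum_1 _ _ hw1']
    exact Finset.centerMass_mem_convexHull t' (fun i hi => hw i (hsub hi))
      (by rw [hw1']; norm_num) hzF
  · exact convexHull_min Set.inter_subset_right hFconv
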